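/- Let ν ≪ π be probability measures, set ℓ := log(dν/dπ) and R := R₂(ν‖π). Then the positive part satisfies E_ν[(max{ℓ,0})²] ≤ R² + 2R + 2. -/

import Mathlib

open MeasureTheory
open scoped ENNReal

noncomputable section

lemma pointwise_aux {R t : ℝ} (hR0 : 0 ≤ R) :
    (max t 0)^2 ≤ R^2 + 2*R + 2 + 2*(R+1)*Real.exp (-R) * (Real.exp t - Real.exp R) := by
  have hE : Real.exp (-R) * Real.exp t = Real.exp (t - R) := by
    rw [← Real.exp_add]; ring_nf
  have hE1 : Real.exp (-R) * Real.exp R = 1 := by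
    rw [← Real.exp_add]; simp
  have key : R^2 + 2*R + 2 + 2*(R+1)*Real.exp (-R) * (Real.exp t - Real.exp R)
      = R^2 + 2*(R+1)*Real.exp (t-R) := by
    have : 2*(R+1)*Real.exp (-R) * (Real.exp t - Real.exp R)
        = 2*(R+1)*(Real.exp (-R) * Real.exp t) - 2*(R+1)*(Real.exp (-R) * Real.exp R) := by ring
    rw [this, hE, hE1]; ring
  rw [key]
  rcases le_total t 0 with ht | ht
  · rw [max_eq_right ht]
    have := Real.exp_pos (t - R)
    nlinarith
  · rw [max_eq_left ht]
    rcases le_total t R with htR | htR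
    · have := Real.exp_pos (t - R)
      nlinarith
    · have hs : 0 ≤ t - R := by linarith
      have hq := Real.quadratic_le_exp_of_nonneg hs
      nlinarith [sq_nonneg (t - R)]

/-- For probability measures ν ≪ π with ℓ = log(dν/dπ) and
R = R₂(ν‖π) = log E_ν[dν/dπ] (assumed finite, i.e. dν/dπ is ν-integrable),
the positive part satisfies E_ν[(max{ℓ,0})²] ≤ R² + 2R + 2. -/
theorem pos_part_log_density_sq_bound {α : Type*} [MeasurableSpace α]
    (ν π : Measure α) [IsProbabilityMeasure ν] [IsProbabilityMeasure π]
    (hac : ν ≪ π)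
    (hint : Integrable (fun x => (ν.rnDeriv π x).toReal) ν)
    (R : ℝ) (hR : R = Real.log (∫ x, (ν.rnDeriv π x).toReal ∂ν)) :
    ∫ x, (max (Real.log ((ν.rnDeriv π x).toReal)) 0)^2 ∂ν ≤ R^2 + 2*R + 2 := by
  set g := ν.rnDeriv π with hg
  have hgm : Measurable g := Measure.measurable_rnDeriv ν π
  have hne : ∀ᵐ x ∂ν, g x ≠ ⊤ := hac.ae_le (Measure.rnDeriv_ne_top ν π)
  have hpos : ∀ᵐ x ∂ν, 0 < g x := Measure.rnDeriv_pos hac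
  set I := ∫ x, (g x).toReal ∂ν with hI
  -- I = toReal of the lintegral
  have hL : I = (∫⁻ x, g x ∂ν).toReal :=
    integral_toReal hgm.aemeasurable (hne.mono fun x hx => lt_top_iff_ne_top.2 hx)
  have hLfin : ∫⁻ x, g x ∂ν ≠ ⊤ := by
    have h1 : ∫⁻ x, g x ∂ν = ∫⁻ x, ENNReal.ofReal ((g x).toReal) ∂ν :=
      lintegral_congr_ae (hne.mono fun x hx => (ENNReal.ofReal_toReal hx).symm)
    rw [h1]
    exact hint.lintegral_lt_top.ne
  -- 1 ≤ lintegral of g wrt ν, via Cauchy-Schwarz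
  have hLone : 1 ≤ ∫⁻ x, g x ∂ν := by
    have hmul : ∫⁻ x, g x ∂ν = ∫⁻ x, g x * g x ∂π :=
      (lintegral_rnDeriv_mul hac hgm.aemeasurable).symm
    have hconj : Real.HolderConjugate 2 2 := ⟨by norm_num, by norm_num, by norm_num⟩
    have hCS := ENNReal.lintegral_mul_le_Lp_mul_Lq π hconj hgm.aemeasurable
      (aemeasurable_const (b := (1:ℝ≥0∞)))
    simp only [Pi.mul_apply, mul_one, ENNReal.one_rpow, lintegral_const, measure_univ,
      mul_one, ENNReal.one_rpow, one_mul] at hCS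
    rw [Measure.lintegral_rnDeriv hac, measure_univ] at hCS
    have hsq : ∫⁻ x, g x ^ (2:ℝ) ∂π = ∫⁻ x, g x * g x ∂π := by
      apply lintegral_congr
      intro x
      rw [show (2:ℝ) = ((2:ℕ):ℝ) by norm_num, ENNReal.rpow_natCast]
      ring
    rw [hsq, ← hmul] at hCS
    have := ENNReal.rpow_le_rpow hCS (by norm_num : (0:ℝ) ≤ 2)
    rwa [ENNReal.one_rpow, ← ENNReal.rpow_mul, show (1/2 : ℝ) * 2 = 1 by norm_num,
      ENNReal.rpow_one] at this
  have hIone : 1 ≤ I := by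
    rw [hL]
    calc (1:ℝ) = (1:ℝ≥0∞).toReal := by simp
    _ ≤ (∫⁻ x, g x ∂ν).toReal := ENNReal.toReal_mono hLfin hLone
  have hIpos : 0 < I := lt_of_lt_of_le one_pos hIone
  have hR0 : 0 ≤ R := hR ▸ Real.log_nonneg hIone
  have hexpR : Real.exp R = I := by rw [hR]; exact Real.exp_log hIpos
  set c := 2*(R+1)*Real.exp (-R) with hc
  set A := R^2 + 2*R + 2 with hA
  have hdom : Integrable (fun x => (A - c*Real.exp R) + c * (g x).toReal) ν :=
    (integrable_const _).add (hint.const_mul c)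
  have hle : ∀ᵐ x ∂ν, (max (Real.log ((g x).toReal)) 0)^2
      ≤ (A - c*Real.exp R) + c * (g x).toReal := by
    filter_upwards [hpos, hne] with x hx hx'
    have htr : 0 < (g x).toReal := ENNReal.toReal_pos hx.ne' hx'
    have hexp : Real.exp (Real.log ((g x).toReal)) = (g x).toReal := Real.exp_log htr
    have := pointwise_aux (t := Real.log ((g x).toReal)) hR0
    rw [hexp] at this
    rw [hA, hc]
    linarith
  have hnn : 0 ≤ᵐ[ν] fun x => (max (Real.log ((g x).toReal)) 0)^2 :=
    Filter.Eventually.of_forall fun x => sq_nonneg _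
  calc ∫ x, (max (Real.log ((g x).toReal)) 0)^2 ∂ν
      ≤ ∫ x, ((A - c*Real.exp R) + c * (g x).toReal) ∂ν :=
        integral_mono_of_nonneg hnn hdom hle
    _ = (A - c*Real.exp R) + c * I := by
        rw [integral_add (integrable_const _) (hint.const_mul c), integral_const,
          integral_const_mul, probReal_univ]
        simp [hI]
    _ = A := by rw [hexpR]; ring
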